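/- Let V be a finite-dimensional complex vector space, let S ⊆ ℝ be a preconnected set, and let (B_t)_{t∈ℝ} be a family of hermitian sesquilinear forms on V such that for each pair v, w ∈ V the function t ↦ B_t(v,w) is continuous. If B_t is nondegenerate for every t ∈ S, then the positive index p(B_t) and the negative index q(B_t) are constant functions of t on S. -/

import Mathlib

/-- The positive index of a form `B` on a complex vector space `W`: the maximal dimension
of a subspace on which `B` is positive definite. -/
noncomputable def posIndex {W : Type*} [AddCommGroup W] [Module ℂ W] (B : W → W → ℂ) : ℕ :=
  sSup {k : ℕ | ∃ U : Submodule ℂ W, Module.finrank ℂ ↥U = k ∧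
    ∀ x ∈ U, x ≠ 0 → 0 < (B x x).re ∧ (B x x).im = 0}

/-- The negative index of a form `B` on a complex vector space `W`: the maximal dimension
of a subspace on which `B` is negative definite. -/
noncomputable def negIndex {W : Type*} [AddCommGroup W] [Module ℂ W] (B : W → W → ℂ) : ℕ :=
  sSup {k : ℕ | ∃ U : Submodule ℂ W, Module.finrank ℂ ↥U = k ∧
    ∀ x ∈ U, x ≠ 0 → (B x x).re < 0 ∧ (B x x).im = 0}

open Module

section PosIndexBasics

variable {V : Type*} [AddCommGroup V] [Module ℂ V] [FiniteDimensional ℂ V]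

lemma posSet_bddAbove (B : V → V → ℂ) :
    BddAbove {k : ℕ | ∃ U : Submodule ℂ V, Module.finrank ℂ ↥U = k ∧
      ∀ x ∈ U, x ≠ 0 → 0 < (B x x).re ∧ (B x x).im = 0} := by
  refine ⟨Module.finrank ℂ V, ?_⟩
  rintro k ⟨U, rfl, -⟩
  exact U.finrank_le

lemma posSet_nonempty (B : V → V → ℂ) :
    Set.Nonempty {k : ℕ | ∃ U : Submodule ℂ V, Module.finrank ℂ ↥U = k ∧
      ∀ x ∈ U, x ≠ 0 → 0 < (B x x).re ∧ (B x x).im = 0} := by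
  refine ⟨0, ⊥, finrank_bot ℂ V, ?_⟩
  intro x hx hne
  exact absurd ((Submodule.mem_bot ℂ).mp hx) hne

lemma exists_posIndex_witness (B : V → V → ℂ) :
    ∃ U : Submodule ℂ V, Module.finrank ℂ ↥U = posIndex B ∧
      ∀ x ∈ U, x ≠ 0 → 0 < (B x x).re ∧ (B x x).im = 0 :=
  Nat.sSup_mem (posSet_nonempty B) (posSet_bddAbove B)

lemma le_posIndex (B : V → V → ℂ) (U : Submodule ℂ V)
    (hU : ∀ x ∈ U, x ≠ 0 → 0 < (B x x).re ∧ (B x x).im = 0) :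
    Module.finrank ℂ ↥U ≤ posIndex B :=
  le_csSup (posSet_bddAbove B) ⟨U, rfl, hU⟩

lemma negIndex_eq_posIndex_neg (B : V → V → ℂ) :
    negIndex B = posIndex (fun v w => -(B v w)) := by
  unfold negIndex posIndex
  congr 1
  ext k
  simp only [Set.mem_setOf_eq, Complex.neg_re, Complex.neg_im, neg_pos, neg_eq_zero]

lemma posIndex_add_negIndex_le (B : V → V → ℂ) :
    posIndex B + negIndex B ≤ Module.finrank ℂ V := by
  obtain ⟨U, hUrk, hU⟩ := exists_posIndex_witness B
  rw [negIndex_eq_posIndex_neg]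
  obtain ⟨W, hWrk, hW⟩ := exists_posIndex_witness (fun v w => -(B v w))
  have hdisj : U ⊓ W = ⊥ := by
    rw [eq_bot_iff]
    intro x hx
    rw [Submodule.mem_bot]
    by_contra hne
    have h1 := (hU x hx.1 hne).1
    have h2 := (hW x hx.2 hne).1
    simp only [Complex.neg_re, neg_pos] at h2
    exact absurd h1 (not_lt.mpr h2.le)
  have := Submodule.finrank_sup_add_finrank_inf_eq U W
  rw [hdisj, finrank_bot, add_zero] at this
  rw [← hUrk, ← hWrk, ← this]
  exact (U ⊔ W).finrank_le

end PosIndexBasics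

section NegIndexBasics

variable {V : Type*} [AddCommGroup V] [Module ℂ V] [FiniteDimensional ℂ V]

lemma negSet_bddAbove (B : V → V → ℂ) :
    BddAbove {k : ℕ | ∃ U : Submodule ℂ V, Module.finrank ℂ ↥U = k ∧
      ∀ x ∈ U, x ≠ 0 → (B x x).re < 0 ∧ (B x x).im = 0} := by
  refine ⟨Module.finrank ℂ V, ?_⟩
  rintro k ⟨U, rfl, -⟩
  exact U.finrank_le

lemma negSet_nonempty (B : V → V → ℂ) :
    Set.Nonempty {k : ℕ | ∃ U : Submodule ℂ V, Module.finrank ℂ ↥U = k ∧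
      ∀ x ∈ U, x ≠ 0 → (B x x).re < 0 ∧ (B x x).im = 0} := by
  refine ⟨0, ⊥, finrank_bot ℂ V, ?_⟩
  intro x hx hne
  exact absurd ((Submodule.mem_bot ℂ).mp hx) hne

lemma exists_negIndex_witness (B : V → V → ℂ) :
    ∃ U : Submodule ℂ V, Module.finrank ℂ ↥U = negIndex B ∧
      ∀ x ∈ U, x ≠ 0 → (B x x).re < 0 ∧ (B x x).im = 0 :=
  Nat.sSup_mem (negSet_nonempty B) (negSet_bddAbove B)

lemma le_negIndex (B : V → V → ℂ) (U : Submodule ℂ V)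
    (hU : ∀ x ∈ U, x ≠ 0 → (B x x).re < 0 ∧ (B x x).im = 0) :
    Module.finrank ℂ ↥U ≤ negIndex B :=
  le_csSup (negSet_bddAbove B) ⟨U, rfl, hU⟩

end NegIndexBasics
section Spectral

variable {V : Type*} [AddCommGroup V] [Module ℂ V] [FiniteDimensional ℂ V]

lemma herm_im_eq_zero (B : V → V → ℂ) (hherm : ∀ v w : V, B w v = starRingEnd ℂ (B v w))
    (x : V) : (B x x).im = 0 := by
  have := hherm x x
  have : B x x = starRingEnd ℂ (B x x) := this
  rw [eq_comm, Complex.conj_eq_iff_im] at this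
  exact this

lemma posIndex_add_negIndex_eq_of_nondeg (B : V → V → ℂ)
    (hadd_l : ∀ v v' w : V, B (v + v') w = B v w + B v' w)
    (hsmul_l : ∀ (c : ℂ) (v w : V), B (c • v) w = starRingEnd ℂ c * B v w)
    (hadd_r : ∀ v w w' : V, B v (w + w') = B v w + B v w')
    (hsmul_r : ∀ (c : ℂ) (v w : V), B v (c • w) = c * B v w)
    (hherm : ∀ v w : V, B w v = starRingEnd ℂ (B v w))
    (hnondeg : ∀ v : V, (∀ w : V, B v w = 0) → v = 0) :
    posIndex B + negIndex B = Module.finrank ℂ V := by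
  classical
  set n := Module.finrank ℂ V with hn_def
  set E := EuclideanSpace ℂ (Fin n) with hE_def
  -- linear equivalence to Euclidean space
  let e : V ≃ₗ[ℂ] E :=
    (Module.finBasis ℂ V).equivFun.trans (WithLp.linearEquiv 2 ℂ (Fin n → ℂ)).symm
  set B' : E → E → ℂ := fun x y => B (e.symm x) (e.symm y) with hB'
  have hB'herm : ∀ x y : E, B' y x = starRingEnd ℂ (B' x y) := fun x y => hherm _ _
  -- the self-adjoint operator representing B'
  have mkT : ∀ y : E, ∃ z : E, ∀ x : E, inner ℂ z x = B' y x := by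
    intro y
    let f : E →ₗ[ℂ] ℂ :=
      { toFun := fun x => B' y x
        map_add' := fun a b => by simp only [hB', map_add]; exact hadd_r _ _ _
        map_smul' := fun c a => by
          simp only [hB', map_smul, RingHom.id_apply, smul_eq_mul]; exact hsmul_r _ _ _ }
    refine ⟨(InnerProductSpace.toDual ℂ E).symm (LinearMap.toContinuousLinearMap f), ?_⟩
    intro x
    exact InnerProductSpace.toDual_symm_apply
  choose T₀ hT₀ using mkT
  have hT₀add : ∀ y y' : E, T₀ (y + y') = T₀ y + T₀ y' := by
    intro y y'
    refine ext_inner_right ℂ fun x => ?_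
    rw [hT₀, inner_add_left, hT₀, hT₀]
    simp only [hB', map_add]
    exact hadd_l _ _ _
  have hT₀smul : ∀ (c : ℂ) (y : E), T₀ (c • y) = c • T₀ y := by
    intro c y
    refine ext_inner_right ℂ fun x => ?_
    rw [hT₀, inner_smul_left, hT₀]
    simp only [hB', map_smul]
    exact hsmul_l _ _ _
  let T : E →ₗ[ℂ] E := { toFun := T₀, map_add' := hT₀add, map_smul' := hT₀smul }
  have hTapp : ∀ y x : E, inner ℂ (T y) x = B' y x := hT₀
  have hT : T.IsSymmetric := by
    intro x y
    rw [hTapp, ← inner_conj_symm, hTapp]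
    exact hherm _ _
  have hn : Module.finrank ℂ E = n := finrank_euclideanSpace_fin
  set b := hT.eigenvectorBasis hn with hb_def
  set μ := hT.eigenvalues hn with hμ_def
  -- key formula
  have key : ∀ x : E, B' x x = ∑ i, ((μ i : ℂ) * (starRingEnd ℂ (b.repr x i) * b.repr x i)) := by
    intro x
    rw [← hTapp]
    rw [← b.sum_inner_mul_inner (T x) x]
    refine Finset.sum_congr rfl fun i _ => ?_
    have h1 : (inner ℂ (T x) (b i) : ℂ) = starRingEnd ℂ (inner ℂ (b i) (T x)) :=
      (inner_conj_symm _ _).symm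
    have h2 : (inner ℂ (b i) (T x) : ℂ) = b.repr (T x) i := (b.repr_apply_apply _ _).symm
    have h3 : b.repr (T x) i = (μ i : ℂ) * b.repr x i := hT.eigenvectorBasis_apply_self_apply hn x i
    have h4 : (inner ℂ (b i) x : ℂ) = b.repr x i := (b.repr_apply_apply _ _).symm
    rw [h1, h2, h3, h4]
    rw [map_mul, Complex.conj_ofReal]
    ring
  -- eigenvalues are nonzero
  have hμne : ∀ i, μ i ≠ 0 := by
    intro i hμi
    have hb0 : T (b i) = 0 := by
      have := hT.apply_eigenvectorBasis hn i
      rw [← hμ_def, ← hb_def] at this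
      rw [this, hμi]
      simp
    have : ∀ x : E, B' (b i) x = 0 := by
      intro x
      rw [← hTapp, hb0, inner_zero_left]
    have hB0 : ∀ w : V, B (e.symm (b i)) w = 0 := by
      intro w
      have := this (e w)
      simpa [hB'] using this
    have := hnondeg _ hB0
    have : b i = 0 := by
      have h := congrArg e this
      simpa using h
    exact b.toBasis.ne_zero i (by simpa using this)
  -- positive and negative eigenvalue index sets
  set P : Finset (Fin n) := Finset.univ.filter (fun i => 0 < μ i) with hP_def
  set N : Finset (Fin n) := Finset.univ.filter (fun i => μ i < 0) with hN_def
  have hcard : P.card + N.card = n := by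
    have : N = Finset.univ.filter (fun i => ¬ 0 < μ i) := by
      refine Finset.filter_congr fun i _ => ?_
      constructor
      · intro h; exact not_lt.mpr h.le
      · intro h; exact lt_of_le_of_ne (not_lt.mp h) (hμne i)
    rw [this, Finset.card_filter_add_card_filter_not, Finset.card_univ, Fintype.card_fin]
  -- real quadratic form values
  have hre : ∀ x : E, (B' x x).re = ∑ i, μ i * Complex.normSq (b.repr x i) := by
    intro x
    rw [key, Complex.re_sum]
    refine Finset.sum_congr rfl fun i _ => ?_
    rw [← Complex.normSq_eq_conj_mul_self, ← Complex.ofReal_mul, Complex.ofReal_re]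
  -- finrank of span of a subfamily of the basis
  have hrank : ∀ Q : Finset (Fin n),
      Module.finrank ℂ ↥(Submodule.span ℂ (⇑b '' ↑Q)) = Q.card := by
    intro Q
    have hli : LinearIndependent ℂ (fun i : ↥(↑Q : Set (Fin n)) => b ↑i) := by
      have := b.toBasis.linearIndependent
      rw [OrthonormalBasis.coe_toBasis] at this
      exact this.comp Subtype.val Subtype.val_injective
    have him : ⇑b '' ↑Q = Set.range (fun i : ↥(↑Q : Set (Fin n)) => b ↑i) :=
      Set.image_eq_range _ _
    rw [him, finrank_span_eq_card hli]
    simp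
  -- membership in span: repr support condition
  have hmem : ∀ (Q : Finset (Fin n)) (x : E), x ∈ Submodule.span ℂ (⇑b '' ↑Q) →
      ∀ i, i ∉ Q → b.repr x i = 0 := by
    intro Q x hx i hi
    have hx' : x ∈ Submodule.span ℂ (⇑b.toBasis '' ↑Q) := by
      rwa [OrthonormalBasis.coe_toBasis]
    rw [Basis.mem_span_image] at hx'
    have : b.toBasis.repr x i = 0 := by
      by_contra h
      exact hi (hx' (Finsupp.mem_support_iff.mpr h))
    rwa [OrthonormalBasis.coe_toBasis_repr_apply] at this
  -- nonzero elements have nonzero repr somewhere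
  have hrepr_ne : ∀ x : E, x ≠ 0 → ∃ i, b.repr x i ≠ 0 := by
    intro x hx
    by_contra h
    push_neg at h
    apply hx
    have : b.repr x = 0 := by
      ext i
      exact h i
    have := congrArg b.repr.symm this
    simpa using this
  -- positive definite subspace
  have hpos : ∀ x ∈ Submodule.span ℂ (⇑b '' ↑P), x ≠ 0 → 0 < (B' x x).re := by
    intro x hx hne
    rw [hre]
    refine Finset.sum_pos' (fun i _ => ?_) ?_
    · by_cases hiP : i ∈ P
      · have : 0 < μ i := (Finset.mem_filter.mp hiP).2
        exact mul_nonneg this.le (Complex.normSq_nonneg _)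
      · rw [hmem P x hx i hiP]
        simp
    · obtain ⟨i, hi⟩ := hrepr_ne x hne
      have hiP : i ∈ P := by
        by_contra hiP
        exact hi (hmem P x hx i hiP)
      refine ⟨i, Finset.mem_univ i, ?_⟩
      have h1 : 0 < μ i := (Finset.mem_filter.mp hiP).2
      have h2 : 0 < Complex.normSq (b.repr x i) := Complex.normSq_pos.mpr hi
      exact mul_pos h1 h2
  -- negative definite subspace
  have hneg : ∀ x ∈ Submodule.span ℂ (⇑b '' ↑N), x ≠ 0 → (B' x x).re < 0 := by
    intro x hx hne
    rw [hre]
    have : 0 < ∑ i, -(μ i * Complex.normSq (b.repr x i)) := by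
      refine Finset.sum_pos' (fun i _ => ?_) ?_
      · by_cases hiN : i ∈ N
        · have h1 : μ i < 0 := (Finset.mem_filter.mp hiN).2
          have h2 : 0 ≤ Complex.normSq (b.repr x i) := Complex.normSq_nonneg _
          nlinarith
        · rw [hmem N x hx i hiN]
          simp
      · obtain ⟨i, hi⟩ := hrepr_ne x hne
        have hiN : i ∈ N := by
          by_contra hiN
          exact hi (hmem N x hx i hiN)
        refine ⟨i, Finset.mem_univ i, ?_⟩
        have h1 : μ i < 0 := (Finset.mem_filter.mp hiN).2
        have h2 : 0 < Complex.normSq (b.repr x i) := Complex.normSq_pos.mpr hi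
        nlinarith
    rw [Finset.sum_neg_distrib] at this
    linarith
  -- transport subspaces back to V
  have himzero : ∀ x : V, (B x x).im = 0 := herm_im_eq_zero B hherm
  have pull : ∀ (W : Submodule ℂ E), (∀ x ∈ W, x ≠ 0 → 0 < (B' x x).re) →
      ∃ U : Submodule ℂ V, Module.finrank ℂ ↥U = Module.finrank ℂ ↥W ∧
        ∀ x ∈ U, x ≠ 0 → 0 < (B x x).re ∧ (B x x).im = 0 := by
    intro W hW
    refine ⟨W.map (e.symm : E →ₗ[ℂ] V), LinearEquiv.finrank_map_eq e.symm W, ?_⟩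
    rintro x hx hne
    obtain ⟨u, hu, rfl⟩ := hx
    have hune : u ≠ 0 := by
      rintro rfl
      simp at hne
    have : 0 < (B' u u).re := hW u hu hune
    exact ⟨by simpa [hB'] using this, himzero _⟩
  have pullneg : ∀ (W : Submodule ℂ E), (∀ x ∈ W, x ≠ 0 → (B' x x).re < 0) →
      ∃ U : Submodule ℂ V, Module.finrank ℂ ↥U = Module.finrank ℂ ↥W ∧
        ∀ x ∈ U, x ≠ 0 → (B x x).re < 0 ∧ (B x x).im = 0 := by
    intro W hW
    refine ⟨W.map (e.symm : E →ₗ[ℂ] V), LinearEquiv.finrank_map_eq e.symm W, ?_⟩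
    rintro x hx hne
    obtain ⟨u, hu, rfl⟩ := hx
    have hune : u ≠ 0 := by
      rintro rfl
      simp at hne
    have : (B' u u).re < 0 := hW u hu hune
    exact ⟨by simpa [hB'] using this, himzero _⟩
  obtain ⟨Up, hUprk, hUp⟩ := pull _ hpos
  obtain ⟨Un, hUnrk, hUn⟩ := pullneg _ hneg
  have hple : P.card ≤ posIndex B := by
    rw [← hrank P, ← hUprk]
    exact le_posIndex B Up hUp
  have hnle : N.card ≤ negIndex B := by
    have : Module.finrank ℂ ↥Un ≤ negIndex B :=
      le_csSup (by
        refine ⟨Module.finrank ℂ V, ?_⟩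
        rintro k ⟨U, rfl, -⟩
        exact U.finrank_le) ⟨Un, rfl, hUn⟩
    rw [← hrank N, ← hUnrk]
    exact this
  have hle := posIndex_add_negIndex_le B
  omega

end Spectral
section Continuity

variable {V : Type*} [AddCommGroup V] [Module ℂ V] [FiniteDimensional ℂ V]

lemma eventually_posdef (B : ℝ → V → V → ℂ)
    (hadd_l : ∀ (t : ℝ) (v v' w : V), B t (v + v') w = B t v w + B t v' w)
    (hsmul_l : ∀ (t : ℝ) (c : ℂ) (v w : V), B t (c • v) w = starRingEnd ℂ c * B t v w)
    (hadd_r : ∀ (t : ℝ) (v w w' : V), B t v (w + w') = B t v w + B t v w')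
    (hsmul_r : ∀ (t : ℝ) (c : ℂ) (v w : V), B t v (c • w) = c * B t v w)
    (hcont : ∀ v w : V, Continuous fun s : ℝ => B s v w)
    (t : ℝ) (U : Submodule ℂ V)
    (hU : ∀ x ∈ U, x ≠ 0 → 0 < (B t x x).re) :
    ∀ᶠ s in nhds t, ∀ x ∈ U, x ≠ 0 → 0 < (B s x x).re := by
  classical
  set m := Module.finrank ℂ ↥U with hm_def
  set bU := Module.finBasis ℂ ↥U with hbU_def
  let Bl : ℝ → V →ₛₗ[starRingEnd ℂ] V →ₗ[ℂ] ℂ := fun s =>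
    LinearMap.mk₂'ₛₗ (starRingEnd ℂ) (RingHom.id ℂ) (B s) (hadd_l s)
      (fun c v w => by simpa [smul_eq_mul] using hsmul_l s c v w) (hadd_r s)
      (fun c v w => by simpa [smul_eq_mul] using hsmul_r s c v w)
  have hBl : ∀ (s : ℝ) (v w : V), Bl s v w = B s v w := fun _ _ _ => rfl
  have expand : ∀ (s : ℝ) (c : Fin m → ℂ),
      B s ↑(bU.equivFun.symm c) ↑(bU.equivFun.symm c) =
        ∑ i, ∑ j, starRingEnd ℂ (c i) * (c j * B s ↑(bU i) ↑(bU j)) := by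
    intro s c
    have hx : (↑(bU.equivFun.symm c) : V) = ∑ i, c i • (↑(bU i) : V) := by
      rw [Basis.equivFun_symm_apply]
      push_cast
      rfl
    rw [← hBl, hx]
    simp only [map_sum, LinearMap.sum_apply, LinearMap.map_smulₛₗ, LinearMap.smul_apply,
      LinearMap.map_smul, smul_eq_mul, hBl, RingHom.id_apply, Finset.mul_sum]
    rw [Finset.sum_comm]
    refine Finset.sum_congr rfl fun i _ => Finset.sum_congr rfl fun j _ => ?_
    ring
  set g : ℝ × (Fin m → ℂ) → ℝ := fun p =>
    (∑ i, ∑ j, starRingEnd ℂ (p.2 i) * (p.2 j * B p.1 ↑(bU i) ↑(bU j))).re with hg_def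
  have hgcont : Continuous g := by
    apply Complex.continuous_re.comp
    apply continuous_finset_sum
    intro i _
    apply continuous_finset_sum
    intro j _
    have h1 : Continuous fun p : ℝ × (Fin m → ℂ) => starRingEnd ℂ (p.2 i) :=
      Complex.continuous_conj.comp ((continuous_apply i).comp continuous_snd)
    have h2 : Continuous fun p : ℝ × (Fin m → ℂ) => p.2 j :=
      (continuous_apply j).comp continuous_snd
    have h3 : Continuous fun p : ℝ × (Fin m → ℂ) => B p.1 ↑(bU i) ↑(bU j) :=
      (hcont _ _).comp continuous_fst
    exact h1.mul (h2.mul h3)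
  set K : Set (Fin m → ℂ) := Metric.sphere 0 1 with hK_def
  have hKc : IsCompact K := isCompact_sphere 0 1
  have honK : ∀ c ∈ K, 0 < g (t, c) := by
    intro c hc
    have hcne : c ≠ 0 := by
      intro h
      rw [mem_sphere_zero_iff_norm, h, norm_zero] at hc
      exact one_ne_zero hc.symm
    have hune : bU.equivFun.symm c ≠ 0 := by
      intro h
      exact hcne (by rw [← bU.equivFun.apply_symm_apply c, h, map_zero])
    have hvne : (↑(bU.equivFun.symm c) : V) ≠ 0 := by
      intro h
      exact hune (Subtype.ext h)
    have := hU _ (bU.equivFun.symm c).2 hvne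
    rw [expand t c] at this
    exact this
  have hev : ∀ᶠ s in nhds t, ∀ c ∈ K, 0 < g (s, c) := by
    refine hKc.eventually_forall_of_forall_eventually (x₀ := t) fun c hc => ?_
    have h0 : 0 < g (t, c) := honK c hc
    exact (hgcont.tendsto (t, c)).eventually (eventually_gt_nhds h0)
  refine hev.mono fun s hs x hx hne => ?_
  set xu : ↥U := ⟨x, hx⟩ with hxu_def
  have hxune : xu ≠ 0 := fun h => hne (by simpa [hxu_def] using congrArg Subtype.val h)
  set c : Fin m → ℂ := bU.equivFun xu with hc_def
  have hcne : c ≠ 0 := by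
    intro h
    apply hxune
    calc xu = bU.equivFun.symm c := by rw [hc_def, LinearEquiv.symm_apply_apply]
    _ = 0 := by rw [h, map_zero]
  set r : ℝ := ‖c‖ with hr_def
  have hr : 0 < r := norm_pos_iff.mpr hcne
  set c' : Fin m → ℂ := ((r : ℂ))⁻¹ • c with hc'_def
  have hc'K : c' ∈ K := by
    rw [hK_def, mem_sphere_zero_iff_norm, hc'_def, norm_smul]
    rw [norm_inv, Complex.norm_real, Real.norm_eq_abs, abs_of_pos hr]
    field_simp
    exact hr_def.symm
  have hgs := hs c' hc'K
  have hsymm : bU.equivFun.symm c' = ((r : ℂ))⁻¹ • xu := by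
    rw [hc'_def, map_smul, hc_def, LinearEquiv.symm_apply_apply]
  have hval : (↑(bU.equivFun.symm c') : V) = ((r : ℂ))⁻¹ • x := by
    rw [hsymm]; rfl
  have hform : (B s (((r:ℂ))⁻¹ • x) (((r:ℂ))⁻¹ • x)).re = (r⁻¹ * r⁻¹) * (B s x x).re := by
    rw [hsmul_l s, hsmul_r s, map_inv₀, Complex.conj_ofReal, ← mul_assoc,
      ← Complex.ofReal_inv, ← Complex.ofReal_mul, Complex.re_ofReal_mul]
  have hgval : g (s, c') = (B s (((r:ℂ))⁻¹ • x) (((r:ℂ))⁻¹ • x)).re := by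
    rw [hg_def]
    simp only []
    rw [← expand s c', hval]
  rw [hgval, hform] at hgs
  nlinarith [hgs, hr]

end Continuity
/-- Let `(B_t)` be a continuous family of hermitian sesquilinear forms on a
finite-dimensional complex vector space `V`, and let `S ⊆ ℝ` be preconnected. If `B_t` is
nondegenerate for every `t ∈ S`, then the positive and negative indices of `B_t` are
constant on `S`. -/
theorem signature_constant_on_preconnected {V : Type*} [AddCommGroup V] [Module ℂ V]
    [FiniteDimensional ℂ V]
    (B : ℝ → V → V → ℂ)
    (hB_add_left : ∀ (t : ℝ) (v v' w : V), B t (v + v') w = B t v w + B t v' w)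
    (hB_smul_left : ∀ (t : ℝ) (c : ℂ) (v w : V), B t (c • v) w = starRingEnd ℂ c * B t v w)
    (hB_add_right : ∀ (t : ℝ) (v w w' : V), B t v (w + w') = B t v w + B t v w')
    (hB_smul_right : ∀ (t : ℝ) (c : ℂ) (v w : V), B t v (c • w) = c * B t v w)
    (hB_herm : ∀ (t : ℝ) (v w : V), B t w v = starRingEnd ℂ (B t v w))
    (hB_cont : ∀ v w : V, Continuous fun t : ℝ => B t v w)
    (S : Set ℝ) (hS : IsPreconnected S)
    (hB_nondeg : ∀ t ∈ S, ∀ v : V, (∀ w : V, B t v w = 0) → v = 0) :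
    ∀ s ∈ S, ∀ t ∈ S,
      posIndex (B s) = posIndex (B t) ∧ negIndex (B s) = negIndex (B t) := by
  classical
  set n := Module.finrank ℂ V with hn
  have him : ∀ (s : ℝ) (x : V), (B s x x).im = 0 := fun s => herm_im_eq_zero (B s) (hB_herm s)
  -- local constancy of the indices at points of S
  have hloc : ∀ t ∈ S, ∀ᶠ s in nhds t,
      posIndex (B s) = posIndex (B t) ∧ negIndex (B s) = negIndex (B t) := by
    intro t ht
    have hsum_t : posIndex (B t) + negIndex (B t) = n :=
      posIndex_add_negIndex_eq_of_nondeg (B t) (hB_add_left t) (hB_smul_left t)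
        (hB_add_right t) (hB_smul_right t) (hB_herm t) (hB_nondeg t ht)
    obtain ⟨U, hUrk, hU⟩ := exists_posIndex_witness (B t)
    have hUev : ∀ᶠ s in nhds t, ∀ x ∈ U, x ≠ 0 → 0 < (B s x x).re :=
      eventually_posdef B hB_add_left hB_smul_left hB_add_right hB_smul_right hB_cont t U
        (fun x hx hne => (hU x hx hne).1)
    obtain ⟨W, hWrk, hW⟩ := exists_negIndex_witness (B t)
    have hWev : ∀ᶠ s in nhds t, ∀ x ∈ W, x ≠ 0 → 0 < (-(B s x x)).re := by
      refine eventually_posdef (fun s v w => -(B s v w))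
        (fun s v v' w => by show -B s (v+v') w = -B s v w + -B s v' w; rw [hB_add_left]; ring)
        (fun s c v w => by show -B s (c • v) w = starRingEnd ℂ c * -B s v w; rw [hB_smul_left]; ring)
        (fun s v w w' => by show -B s v (w+w') = -B s v w + -B s v w'; rw [hB_add_right]; ring)
        (fun s c v w => by show -B s v (c • w) = c * -B s v w; rw [hB_smul_right]; ring)
        (fun v w => (hB_cont v w).neg) t W ?_
      intro x hx hne
      have := (hW x hx hne).1
      simpa using this
    refine (hUev.and hWev).mono fun s hs => ?_
    have hps : posIndex (B t) ≤ posIndex (B s) := by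
      rw [← hUrk]
      exact le_posIndex (B s) U fun x hx hne => ⟨hs.1 x hx hne, him s x⟩
    have hqs : negIndex (B t) ≤ negIndex (B s) := by
      rw [← hWrk]
      refine le_negIndex (B s) W fun x hx hne => ⟨?_, him s x⟩
      have := hs.2 x hx hne
      simpa using this
    have hle : posIndex (B s) + negIndex (B s) ≤ n := posIndex_add_negIndex_le (B s)
    omega
  -- constancy on the preconnected set
  have main : ∀ s₀ ∈ S, ∀ t ∈ S,
      posIndex (B t) = posIndex (B s₀) ∧ negIndex (B t) = negIndex (B s₀) := by
    intro s₀ hs₀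
    by_contra hcon
    push_neg at hcon
    obtain ⟨t₁, ht₁, hne₁⟩ := hcon
    have hO : ∀ t, t ∈ S → ∃ O : Set ℝ, IsOpen O ∧ t ∈ O ∧ ∀ s ∈ O,
        posIndex (B s) = posIndex (B t) ∧ negIndex (B s) = negIndex (B t) := by
      intro t ht
      obtain ⟨O, hO1, hO2, hO3⟩ := eventually_nhds_iff.mp (hloc t ht)
      exact ⟨O, hO2, hO3, hO1⟩
    choose O hOopen hOmem hOconst using hO
    set Pgood : ℝ → Prop := fun t =>
      posIndex (B t) = posIndex (B s₀) ∧ negIndex (B t) = negIndex (B s₀) with hPgood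
    set u : Set ℝ := ⋃ (t : ℝ) (ht : t ∈ S) (_ : Pgood t), O t ht with hu_def
    set v : Set ℝ := ⋃ (t : ℝ) (ht : t ∈ S) (_ : ¬ Pgood t), O t ht with hv_def
    have hu : IsOpen u :=
      isOpen_iUnion fun t => isOpen_iUnion fun ht => isOpen_iUnion fun _ => hOopen t ht
    have hv : IsOpen v :=
      isOpen_iUnion fun t => isOpen_iUnion fun ht => isOpen_iUnion fun _ => hOopen t ht
    have hsub : S ⊆ u ∪ v := by
      intro t ht
      by_cases hc : Pgood t
      · exact Or.inl (Set.mem_iUnion.mpr ⟨t, Set.mem_iUnion.mpr ⟨ht,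
          Set.mem_iUnion.mpr ⟨hc, hOmem t ht⟩⟩⟩)
      · exact Or.inr (Set.mem_iUnion.mpr ⟨t, Set.mem_iUnion.mpr ⟨ht,
          Set.mem_iUnion.mpr ⟨hc, hOmem t ht⟩⟩⟩)
    have h1 : (S ∩ u).Nonempty := by
      refine ⟨s₀, hs₀, Set.mem_iUnion.mpr ⟨s₀, Set.mem_iUnion.mpr ⟨hs₀,
        Set.mem_iUnion.mpr ⟨⟨rfl, rfl⟩, hOmem s₀ hs₀⟩⟩⟩⟩
    have h2 : (S ∩ v).Nonempty := by
      refine ⟨t₁, ht₁, Set.mem_iUnion.mpr ⟨t₁, Set.mem_iUnion.mpr ⟨ht₁,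
        Set.mem_iUnion.mpr ⟨?_, hOmem t₁ ht₁⟩⟩⟩⟩
      intro hg
      exact hne₁ hg.1 hg.2
    obtain ⟨x, hxS, hxu, hxv⟩ := hS u v hu hv hsub h1 h2
    obtain ⟨a, ha⟩ := Set.mem_iUnion.mp hxu
    obtain ⟨haS, ha'⟩ := Set.mem_iUnion.mp ha
    obtain ⟨hag, hxa⟩ := Set.mem_iUnion.mp ha'
    obtain ⟨b, hb⟩ := Set.mem_iUnion.mp hxv
    obtain ⟨hbS, hb'⟩ := Set.mem_iUnion.mp hb
    obtain ⟨hbg, hxb⟩ := Set.mem_iUnion.mp hb'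
    have hca := hOconst a haS x hxa
    have hcb := hOconst b hbS x hxb
    apply hbg
    constructor
    · rw [← hcb.1, hca.1, hag.1]
    · rw [← hcb.2, hca.2, hag.2]
  intro s hs t ht
  obtain ⟨h1, h2⟩ := main s hs t ht
  exact ⟨h1.symm, h2.symm⟩
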